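/- For every finite connected simple graph G on n vertices with minimum degree at least δ, there exists a burning sequence of G of length at most ⌈√(24n/(δ+1))⌉. -/
import Mathlib

lemma dist_getVert_le {V : Type} {G : SimpleGraph V} (hconn : G.Connected)
    {x w : V} (p : G.Walk x w) (i : ℕ) : G.dist x (p.getVert i) ≤ i := by
  induction p generalizing i with
  | nil => simp [SimpleGraph.Walk.getVert, SimpleGraph.dist_self]
  | @cons u v w h q ih =>
    cases i with
    | zero => simp
    | succ i =>
      calc G.dist u ((SimpleGraph.Walk.cons h q).getVert (i+1))
          ≤ G.dist u v + G.dist v (q.getVert i) := by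
            rw [SimpleGraph.Walk.getVert_cons_succ]; exact hconn.dist_triangle
        _ ≤ 1 + i := by
            gcongr
            · exact (SimpleGraph.dist_eq_one_iff_adj.mpr h).le
            · exact ih i
        _ = i + 1 := by omega

lemma getVert_dist_le {V : Type} {G : SimpleGraph V}
    {x w : V} (p : G.Walk x w) (i : ℕ) : G.dist (p.getVert i) w ≤ p.length - i := by
  induction p generalizing i with
  | nil => simp [SimpleGraph.Walk.getVert, SimpleGraph.dist_self]
  | @cons u v w h q ih =>
    cases i with
    | zero =>
      simpa using SimpleGraph.dist_le (SimpleGraph.Walk.cons h q)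
    | succ i =>
      rw [SimpleGraph.Walk.getVert_cons_succ]
      simpa using ih i

lemma arith_key (s c : ℕ) (hs : 5 ≤ s) (hc : c = (s + 11) / 12) :
    s ^ 2 + 144 * c ^ 2 + 1 ≤ 24 * c * s + 72 * c := by
  have h1 : 12 * c - 11 ≤ s ∧ s ≤ 12 * c ∧ 1 ≤ c := by omega
  obtain ⟨h1, h2, h3⟩ := h1
  rcases Nat.lt_or_ge c 2 with hc2 | hc2
  · interval_cases c <;> interval_cases s <;> omega
  · zify at h1 h2 hc2 ⊢
    nlinarith [mul_nonneg (by omega : (0:ℤ) ≤ 11 - (12 * (c:ℤ) - s)) (by omega : (0:ℤ) ≤ 12 * (c:ℤ) - s)]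



/-- `a : Fin m → V` is a burning sequence of length `m` for `G`: the vertex activated
in round `i+1` is `a i`, and every vertex `v` must be within distance `m - (i+1)` of
some activator `a i`. -/
def IsBurningSeq {V : Type} (G : SimpleGraph V) (m : ℕ) (a : Fin m → V) : Prop :=
  ∀ v : V, ∃ i : Fin m, G.dist v (a i) ≤ m - (i.val + 1)

/-- Every finite connected graph on `n` vertices with minimum degree at least `δ`
has a burning sequence of length at most `⌈√(24n/(δ+1))⌉`. -/
theorem burning_seq_of_min_degree {V : Type} [Fintype V] (G : SimpleGraph V)
    [DecidableRel G.Adj] (hconn : G.Connected) (n δ : ℕ) (hn : Fintype.card V = n)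
    (hδ : δ ≤ G.minDegree) :
    ∃ (m : ℕ) (a : Fin m → V), IsBurningSeq G m a ∧
      m ≤ ⌈Real.sqrt (24 * n / (δ + 1))⌉₊ := by
  classical
  have hne : Nonempty V := hconn.nonempty
  set s : ℕ := ⌈Real.sqrt (24 * n / (δ + 1))⌉₊ with hs_def
  -- basic cardinality facts
  obtain ⟨v₀⟩ := hne
  have hDn : δ + 1 ≤ n := by
    have h1 : G.minDegree ≤ G.degree v₀ := G.minDegree_le_degree v₀
    have h2 : G.degree v₀ < Fintype.card V := G.degree_lt_card_verts v₀
    omega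
  have hn1 : 1 ≤ n := by omega
  -- real analysis: 24 * n ≤ (δ+1) * s^2 and 5 ≤ s
  have hxnn : (0:ℝ) ≤ 24 * n / (δ + 1) := by positivity
  have hkey : 24 * n ≤ (δ + 1) * s ^ 2 := by
    have h1 : Real.sqrt (24 * n / (δ + 1)) ≤ (s : ℝ) := Nat.le_ceil _
    have h2 : (24 * n / (δ + 1) : ℝ) ≤ (s : ℝ) ^ 2 := by
      calc (24 * n / (δ + 1) : ℝ) = Real.sqrt (24 * n / (δ + 1)) ^ 2 :=
            (Real.sq_sqrt hxnn).symm
        _ ≤ (s : ℝ) ^ 2 := by gcongr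
    have h3 : (24 * n : ℝ) ≤ (δ + 1) * (s : ℝ) ^ 2 := by
      rw [div_le_iff₀ (by positivity)] at h2
      linarith [h2]
    exact_mod_cast h3
  have hs5 : 5 ≤ s := by
    have h16 : (16:ℝ) < 24 * n / (δ + 1) := by
      rw [lt_div_iff₀ (by positivity)]
      have : (δ + 1 : ℝ) ≤ (n : ℝ) := by exact_mod_cast hDn
      nlinarith
    have h4 : (4:ℝ) < Real.sqrt (24 * n / (δ + 1)) := by
      rw [show (4:ℝ) = Real.sqrt 16 by
        rw [show (16:ℝ) = 4 ^ 2 by norm_num, Real.sqrt_sq (by norm_num)]]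
      exact Real.sqrt_lt_sqrt (by norm_num) h16
    have : (4:ℕ) < s := by
      rw [hs_def, Nat.lt_ceil]
      exact_mod_cast h4
    omega
  set c : ℕ := (s + 11) / 12 with hc_def
  have hc1 : 1 ≤ c := by omega
  by_cases hcase : ∃ x : V, ∀ w : V, G.dist x w ≤ 3 * c - 3
  · -- easy case: small eccentricity vertex, burn from it alone
    obtain ⟨x, hx⟩ := hcase
    refine ⟨3 * c - 2, fun _ => x, ?_, ?_⟩
    · intro v
      refine ⟨⟨0, by omega⟩, ?_⟩
      have := hx v
      rw [SimpleGraph.dist_comm] at this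
      simpa using by omega
    · omega
  · push_neg at hcase
    have hecc : ∀ x : V, ∃ w : V, 3 * c - 2 ≤ G.dist x w := by
      intro x
      obtain ⟨w, hw⟩ := hcase x
      exact ⟨w, by omega⟩
    -- balls of radius 3c-1 around any vertex contain at least (δ+1)*c vertices
    set ball : V → Finset V := fun x => Finset.univ.filter (fun y => G.dist x y ≤ 3 * c - 1)
      with hball_def
    have hball : ∀ x : V, (δ + 1) * c ≤ (ball x).card := by
      intro x
      obtain ⟨w, hw⟩ := hecc x
      obtain ⟨p, hp⟩ := hconn.exists_walk_length_eq_dist x w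
      set u : ℕ → V := fun a => p.getVert (3 * a) with hu_def
      have hL : 3 * c - 2 ≤ p.length := by rw [hp]; exact hw
      have hxu : ∀ a, G.dist x (u a) ≤ 3 * a := fun a => dist_getVert_le hconn p (3 * a)
      have huw : ∀ a, G.dist (u a) w ≤ p.length - 3 * a := fun a => getVert_dist_le p (3 * a)
      have hdist3 : ∀ a b : ℕ, a < b → b < c → 3 ≤ G.dist (u a) (u b) := by
        intro a b hab hbc
        have t1 : G.dist x w ≤ G.dist x (u a) + G.dist (u a) w := hconn.dist_triangle
        have t2 : G.dist (u a) w ≤ G.dist (u a) (u b) + G.dist (u b) w := hconn.dist_triangle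
        have h1 := hxu a
        have h2 := huw b
        have h3 : 3 * b ≤ p.length := by omega
        have h4 : G.dist x w = p.length := hp.symm
        omega
      -- closed neighborhoods
      set F : ℕ → Finset V := fun a => insert (u a) (G.neighborFinset (u a)) with hF_def
      have hFcard : ∀ a, δ + 1 ≤ (F a).card := by
        intro a
        have : (F a).card = G.degree (u a) + 1 := by
          rw [show F a = insert (u a) (G.neighborFinset (u a)) from rfl,
            Finset.card_insert_of_notMem (by simp)]
          rfl
        have hd : δ ≤ G.degree (u a) := le_trans hδ (G.minDegree_le_degree _)
        omega
      have hFdist : ∀ a y, y ∈ F a → G.dist (u a) y ≤ 1 := by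
        intro a y hy
        rw [hF_def] at hy
        simp only [Finset.mem_insert, SimpleGraph.mem_neighborFinset] at hy
        rcases hy with rfl | hy
        · simp [SimpleGraph.dist_self]
        · exact (SimpleGraph.dist_eq_one_iff_adj.mpr hy).le
      have hFsub : ∀ a < c, F a ⊆ ball x := by
        intro a ha y hy
        have h1 : G.dist x y ≤ G.dist x (u a) + G.dist (u a) y := hconn.dist_triangle
        have h2 := hxu a
        have h3 := hFdist a y hy
        rw [hball_def]
        simp only [Finset.mem_filter, Finset.mem_univ, true_and]
        omega
      have hFdisj : ∀ a ∈ Finset.range c, ∀ b ∈ Finset.range c, a ≠ b →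
          Disjoint (F a) (F b) := by
        intro a ha b hb hab
        rw [Finset.mem_range] at ha hb
        rw [Finset.disjoint_left]
        intro y hya hyb
        have h1 := hFdist a y hya
        have h2 := hFdist b y hyb
        have h3 : G.dist (u a) (u b) ≤ G.dist (u a) y + G.dist y (u b) := hconn.dist_triangle
        rw [SimpleGraph.dist_comm (u := y)] at h3
        rcases Nat.lt_or_ge a b with h | h
        · have := hdist3 a b h hb; omega
        · have hba : b < a := by omega
          have := hdist3 b a hba ha
          rw [SimpleGraph.dist_comm] at this
          omega
      calc (δ + 1) * c = ∑ a ∈ Finset.range c, (δ + 1) := by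
            simp [mul_comm]
        _ ≤ ∑ a ∈ Finset.range c, (F a).card := by
            apply Finset.sum_le_sum; intro a _; exact hFcard a
        _ = ((Finset.range c).biUnion F).card := (Finset.card_biUnion hFdisj).symm
        _ ≤ (ball x).card := by
            apply Finset.card_le_card
            intro y hy
            rw [Finset.mem_biUnion] at hy
            obtain ⟨a, ha, hya⟩ := hy
            exact hFsub a (Finset.mem_range.mp ha) hya
    -- maximal packing at pairwise distance ≥ 6c-1
    set P : Finset V → Prop := fun A => ∀ x ∈ A, ∀ y ∈ A, x ≠ y → 6 * c - 1 ≤ G.dist x y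
      with hP_def
    have hPempty : P ∅ := by intro x hx; simp at hx
    obtain ⟨X, hXmem, hXmax⟩ := Finset.exists_max_image
      (Finset.univ.filter P) (fun A => A.card) ⟨∅, Finset.mem_filter.mpr ⟨Finset.mem_univ _, hPempty⟩⟩
    have hXP : P X := (Finset.mem_filter.mp hXmem).2
    -- coverage
    have hcover : ∀ v : V, ∃ x ∈ X, G.dist v x ≤ 6 * c - 2 := by
      intro v
      by_contra hcon
      push_neg at hcon
      have hvX : v ∉ X := by
        intro hv
        have h := hcon v hv
        rw [SimpleGraph.dist_self] at h
        omega
      have hP' : P (insert v X) := by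
        intro x hx y hy hxy
        rw [Finset.mem_insert] at hx hy
        rcases hx with rfl | hx
        · rcases hy with rfl | hy
          · exact absurd rfl hxy
          · have := hcon y hy; omega
        · rcases hy with rfl | hy
          · have := hcon x hx
            rw [SimpleGraph.dist_comm]
            omega
          · exact hXP x hx y hy hxy
      have hle := hXmax (insert v X) (Finset.mem_filter.mpr ⟨Finset.mem_univ _, hP'⟩)
      rw [Finset.card_insert_of_notMem hvX] at hle
      omega
    -- disjointness of the packing balls
    have hballdisj : ∀ x ∈ X, ∀ y ∈ X, x ≠ y → Disjoint (ball x) (ball y) := by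
      intro x hx y hy hxy
      rw [Finset.disjoint_left]
      intro z hzx hzy
      rw [hball_def] at hzx hzy
      simp only [Finset.mem_filter, Finset.mem_univ, true_and] at hzx hzy
      have h1 : G.dist x y ≤ G.dist x z + G.dist z y := hconn.dist_triangle
      rw [SimpleGraph.dist_comm (u := z)] at h1
      have h2 := hXP x hx y hy hxy
      omega
    -- counting: |X| * ((δ+1)*c) ≤ n
    set t : ℕ := X.card with ht_def
    have hcount : t * ((δ + 1) * c) ≤ n := by
      calc t * ((δ + 1) * c) = ∑ x ∈ X, ((δ + 1) * c) := by
            rw [Finset.sum_const, smul_eq_mul]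
        _ ≤ ∑ x ∈ X, (ball x).card := Finset.sum_le_sum (fun x _ => hball x)
        _ = (X.biUnion ball).card := (Finset.card_biUnion hballdisj).symm
        _ ≤ (Finset.univ : Finset V).card := Finset.card_le_card (Finset.subset_univ _)
        _ = n := by rw [Finset.card_univ, hn]
    -- arithmetic: t + 6c ≤ s + 2
    have hts : t + 6 * c ≤ s + 2 := by
      have h1 : 24 * c * t ≤ s ^ 2 := by
        have h2 : (δ + 1) * (24 * c * t) ≤ (δ + 1) * s ^ 2 := by
          calc (δ + 1) * (24 * c * t) = 24 * (t * ((δ + 1) * c)) := by ring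
            _ ≤ 24 * n := by omega
            _ ≤ (δ + 1) * s ^ 2 := hkey
        exact Nat.le_of_mul_le_mul_left h2 (by omega)
      have h3 := arith_key s c hs5 hc_def
      have h4 : 24 * c * (t + 6 * c) < 24 * c * (s + 3) := by
        calc 24 * c * (t + 6 * c) = 24 * c * t + 144 * c ^ 2 := by ring
          _ ≤ s ^ 2 + 144 * c ^ 2 := by omega
          _ < 24 * c * s + 72 * c := by omega
          _ ≤ 24 * c * (s + 3) := by ring_nf; omega
      have := Nat.lt_of_mul_lt_mul_left h4
      omega
    -- assemble the burning sequence
    set m : ℕ := (6 * c - 2) + t with hm_def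
    have hms : m ≤ s := by omega
    set e := X.equivFin with he_def
    refine ⟨m, fun i => if h : i.val < t then (e.symm ⟨i.val, h⟩ : V) else v₀, ?_, hms⟩
    intro v
    obtain ⟨x, hxX, hxd⟩ := hcover v
    set j : Fin t := e ⟨x, hxX⟩ with hj_def
    have hjm : j.val < m := by have := j.isLt; omega
    refine ⟨⟨j.val, hjm⟩, ?_⟩
    have hav : (if h : (j:ℕ) < t then (e.symm ⟨(j:ℕ), h⟩ : V) else v₀) = x := by
      rw [dif_pos j.isLt]
      have : (⟨(j:ℕ), j.isLt⟩ : Fin t) = j := rfl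
      rw [this, hj_def, Equiv.symm_apply_apply]
    simp only [hav]
    have := j.isLt
    omega
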